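/- For every a ∈ ℕ^n with a ≤ t, there is an isomorphism of ℤ^n-graded S-modules r^*(S(−a)) ≅ S(−√a), where √a is the vector with (√a)_i = 1 if a_i > 0 and 0 otherwise. -/

import Mathlib

open MvPolynomial

noncomputable def mono (K : Type) [Field K] {n : ℕ} (a : Fin n → ℕ) : MvPolynomial (Fin n) K :=
  monomial (Finsupp.equivFunOnFinite.symm a) 1

def rmap {n : ℕ} (t a : Fin n → ℕ) : Fin n → ℕ := fun i => if 0 < a i then t i else 0

def sqrtv {n : ℕ} (a : Fin n → ℕ) : Fin n → ℕ := fun i => if 0 < a i then 1 else 0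

structure MultiGrading (K : Type) [Field K] (n : ℕ) (M : Type) [AddCommGroup M]
    [Module (MvPolynomial (Fin n) K) M] [Module K M]
    [IsScalarTower K (MvPolynomial (Fin n) K) M] where
  g : (Fin n → ℕ) → Submodule K M
  internal : DirectSum.IsInternal g
  compat : ∀ a b : Fin n → ℕ, ∀ m ∈ g a, mono K b • m ∈ g (a + b)

variable {K : Type} [Field K] {n : ℕ}

def PosDetermined {M : Type} [AddCommGroup M] [Module (MvPolynomial (Fin n) K) M] [Module K M]
    [IsScalarTower K (MvPolynomial (Fin n) K) M] (G : MultiGrading K n M) (t : Fin n → ℕ) : Prop :=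
  ∀ (a : Fin n → ℕ) (i : Fin n), t i ≤ a i →
    Set.BijOn (fun m => (X i : MvPolynomial (Fin n) K) • m) (G.g a : Set M) (G.g (a + Pi.single i 1) : Set M)

def IsRStar {M N : Type} [AddCommGroup M] [Module (MvPolynomial (Fin n) K) M] [Module K M]
    [IsScalarTower K (MvPolynomial (Fin n) K) M]
    [AddCommGroup N] [Module (MvPolynomial (Fin n) K) N] [Module K N]
    [IsScalarTower K (MvPolynomial (Fin n) K) N]
    (t : Fin n → ℕ) (G : MultiGrading K n M) (H : MultiGrading K n N) : Prop :=
  ∃ e : (Fin n → ℕ) → (M →ₗ[K] N),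
    (∀ a, Set.InjOn (e a) (G.g (rmap t a))) ∧
    (∀ a, e a '' (G.g (rmap t a)) = (H.g a : Set N)) ∧
    (∀ a b : Fin n → ℕ, ∀ m ∈ G.g (rmap t a),
      e (a + b) (mono K (rmap t (a + b) - rmap t a) • m) = mono K b • e a m)

noncomputable def mdim (R : Type) [CommRing R] (M : Type) [AddCommGroup M] [Module R M] :
    WithBot ℕ∞ :=
  ringKrullDim (R ⧸ (⊤ : Submodule R M).annihilator)

noncomputable def mdepth (K : Type) [Field K] (n : ℕ) (M : Type) [AddCommGroup M] [Module (MvPolynomial (Fin n) K) M] : ℕ :=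
  sSup {k : ℕ | ∃ rs : List (MvPolynomial (Fin n) K), rs.length = k ∧
    (∀ r ∈ rs, r ∈ Ideal.span (Set.range (X : Fin n → MvPolynomial (Fin n) K))) ∧
    RingTheory.Sequence.IsRegular M rs}

noncomputable def IsCM (K : Type) [Field K] (n : ℕ) (M : Type) [AddCommGroup M] [Module (MvPolynomial (Fin n) K) M] : Prop :=
  (mdepth K n M : WithBot ℕ∞) = mdim (MvPolynomial (Fin n) K) M

open Classical

lemma symm_add {n : ℕ} (u v : Fin n → ℕ) :
    Finsupp.equivFunOnFinite.symm (u + v)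
      = Finsupp.equivFunOnFinite.symm u + Finsupp.equivFunOnFinite.symm v := by
  ext i; rfl

lemma mono_mul (K : Type) [Field K] {n : ℕ} (u v : Fin n → ℕ) :
    mono K u * mono K v = mono K (u + v) := by
  simp [mono, monomial_mul, symm_add]

lemma mono_ne_zero (K : Type) [Field K] {n : ℕ} (u : Fin n → ℕ) : mono K u ≠ 0 := by
  simp [mono, monomial_eq_zero]

lemma mono_X (K : Type) [Field K] {n : ℕ} (i : Fin n) : mono K (Pi.single i 1) = X i := by
  rw [mono, show (X i : MvPolynomial (Fin n) K) = monomial (Finsupp.single i 1) 1 from rfl]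
  rw [Finsupp.equivFunOnFinite_symm_single i 1]

/-- for `a ≤ t`, `r^*(S(−a)) ≅ S(−√a)` as `ℤ^n`-graded `S`-modules. Here `M = S`
carries the grading of the shifted module `S(−a)` (degree `b` component `K·x^{b−a}` for
`b ≥ a`), and `(N, H)` realizes `r^*` of it; the conclusion produces a graded isomorphism
onto `S(−√a)`. -/
theorem rstar_shift {N : Type}
    [AddCommGroup N] [Module (MvPolynomial (Fin n) K) N] [Module K N]
    [IsScalarTower K (MvPolynomial (Fin n) K) N]
    (t : Fin n → ℕ) (ht : ∀ i, 1 ≤ t i) (a : Fin n → ℕ) (hat : a ≤ t)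
    (G : MultiGrading K n (MvPolynomial (Fin n) K))
    (hG : ∀ b : Fin n → ℕ, G.g b =
      if a ≤ b then Submodule.span K {mono K (b - a)} else ⊥)
    (H : MultiGrading K n N) (hN : IsRStar t G H) :
    ∃ e : N ≃ₗ[MvPolynomial (Fin n) K] MvPolynomial (Fin n) K,
      ∀ b : Fin n → ℕ,
        Submodule.map (e.toLinearMap.restrictScalars K) (H.g b) =
          if sqrtv a ≤ b then Submodule.span K {mono K (b - sqrtv a)} else ⊥ := by
  obtain ⟨e₀, hinj, himg, hcomp⟩ := hN
  have hle : ∀ b : Fin n → ℕ, sqrtv a ≤ b → a ≤ rmap t b := by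
    intro b hb i
    by_cases h : 0 < b i
    · simpa [rmap, h] using hat i
    · have hbi : b i = 0 := Nat.eq_zero_of_not_pos h
      have h2 := hb i
      have ha0 : a i = 0 := by
        by_contra ha
        have hs : sqrtv a i = 1 := by simp [sqrtv, Nat.pos_of_ne_zero ha]
        rw [hs] at h2
        have h4 : (1:ℕ) ≤ b i := h2
        omega
      simp [rmap, h, ha0]
  have hnle : ∀ b : Fin n → ℕ, ¬ sqrtv a ≤ b → ¬ a ≤ rmap t b := by
    intro b hb h
    apply hb
    intro i
    by_cases ha : 0 < a i
    · have hb2 : 0 < b i := by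
        by_contra hbi
        have hr0 : rmap t b i = 0 := by simp [rmap, hbi]
        have h3 := h i
        rw [hr0] at h3
        have h4 : (a i : ℕ) ≤ 0 := h3
        omega
      have hs : sqrtv a i = 1 := by simp [sqrtv, ha]
      rw [hs]
      show (1:ℕ) ≤ b i
      omega
    · have hs : sqrtv a i = 0 := by simp [sqrtv, ha]
      simp [hs]
  have hrmono : ∀ (b : Fin n → ℕ) (i j : Fin n),
      rmap t b j ≤ rmap t (b + Pi.single i 1) j := by
    intro b i j
    have hadd := Pi.add_apply b (Pi.single i 1 : Fin n → ℕ) j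
    by_cases h : 0 < b j
    · have h2 : 0 < (b + (Pi.single i 1 : Fin n → ℕ)) j := by rw [hadd]; omega
      simp [rmap, h, h2]
    · simp [rmap, h]
  set nb : (Fin n → ℕ) → N := fun b => e₀ b (mono K (rmap t b - a)) with hnb
  have hmem : ∀ b, sqrtv a ≤ b → mono K (rmap t b - a) ∈ G.g (rmap t b) := by
    intro b hb
    rw [hG, if_pos (hle b hb)]
    exact Submodule.mem_span_singleton_self _
  have hspan : ∀ b, sqrtv a ≤ b → H.g b = Submodule.span K {nb b} := by
    intro b hb
    have h1 := himg b
    rw [hG, if_pos (hle b hb)] at h1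
    have h2 : Submodule.map (e₀ b) (Submodule.span K {mono K (rmap t b - a)})
        = Submodule.span K {nb b} := by
      rw [Submodule.map_span, Set.image_singleton]
    apply SetLike.coe_injective
    rw [← h2, Submodule.map_coe, h1]
  have hbot : ∀ b, ¬ sqrtv a ≤ b → H.g b = ⊥ := by
    intro b hb
    have h1 := himg b
    rw [hG, if_neg (hnle b hb)] at h1
    rw [Submodule.eq_bot_iff]
    intro x hx
    have hx' : x ∈ ⇑(e₀ b) '' (↑(⊥ : Submodule K (MvPolynomial (Fin n) K))) := by
      rw [h1]; exact hx
    obtain ⟨y, hy, rfl⟩ := hx'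
    have hy0 : y = 0 := by simpa using hy
    simp [hy0]
  have hnbne : ∀ b, sqrtv a ≤ b → nb b ≠ 0 := by
    intro b hb h0
    have h1 : e₀ b (mono K (rmap t b - a)) = e₀ b 0 := by
      rw [map_zero]; exact h0
    have h2 := hinj b (hmem b hb) (Submodule.zero_mem _) h1
    exact mono_ne_zero K _ h2
  have hstep : ∀ (b : Fin n → ℕ) (i : Fin n), sqrtv a ≤ b →
      (X i : MvPolynomial (Fin n) K) • nb b = nb (b + Pi.single i 1) := by
    intro b i hb
    have hc := hcomp b (Pi.single i 1) _ (hmem b hb)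
    rw [mono_X] at hc
    rw [← hc]
    congr 1
    rw [smul_eq_mul, mono_mul]
    congr 1
    funext j
    exact tsub_add_tsub_cancel (hrmono b i j) (hle b hb j)
  set f : (Fin n →₀ ℕ) → (Fin n → ℕ) :=
    fun d => Finsupp.equivFunOnFinite d + sqrtv a with hf
  set v : (Fin n →₀ ℕ) → N := fun d => nb (f d) with hv
  have hfle : ∀ d, sqrtv a ≤ f d := fun d i => Nat.le_add_left _ _
  have hfinj : Function.Injective f := by
    intro d₁ d₂ h
    apply Finsupp.equivFunOnFinite.injective
    funext j
    have h2 := congrFun h j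
    simp only [hf, Pi.add_apply] at h2
    omega
  have hvmem : ∀ d, v d ∈ H.g (f d) := by
    intro d
    rw [hspan _ (hfle d)]
    exact Submodule.mem_span_singleton_self _
  have hli : LinearIndependent K v :=
    iSupIndep.linearIndependent (fun d => H.g (f d))
      (H.internal.submodule_iSupIndep.comp hfinj) hvmem
      (fun d => hnbne _ (hfle d))
  have hfsur : ∀ b : Fin n → ℕ, sqrtv a ≤ b →
      f (Finsupp.equivFunOnFinite.symm (b - sqrtv a)) = b := by
    intro b hb
    simp only [hf, Equiv.apply_symm_apply]
    funext j
    exact Nat.sub_add_cancel (hb j)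
  have hsp : ⊤ ≤ Submodule.span K (Set.range v) := by
    rw [← H.internal.submodule_iSup_eq_top]
    apply iSup_le
    intro b
    by_cases hb : sqrtv a ≤ b
    · rw [hspan b hb]
      apply Submodule.span_le.mpr
      intro x hx
      rw [Set.mem_singleton_iff] at hx
      subst hx
      apply Submodule.subset_span
      refine ⟨Finsupp.equivFunOnFinite.symm (b - sqrtv a), ?_⟩
      show nb (f _) = nb b
      rw [hfsur b hb]
    · rw [hbot b hb]; exact bot_le
  set B : Module.Basis (Fin n →₀ ℕ) K N := Module.Basis.mk hli hsp with hB
  set F : MvPolynomial (Fin n) K ≃ₗ[K] N :=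
    (basisMonomials (Fin n) K).equiv B (Equiv.refl _) with hFdef
  have hF : ∀ d : Fin n →₀ ℕ, F (monomial d 1) = v d := by
    intro d
    have h1 : (basisMonomials (Fin n) K) d = monomial d 1 :=
      congrFun (coe_basisMonomials (Fin n) K) d
    rw [← h1, hFdef, Module.Basis.equiv_apply, Equiv.refl_apply, hB, Module.Basis.mk_apply]
  have hFX : ∀ (i : Fin n) (q : MvPolynomial (Fin n) K),
      F (X i * q) = (X i : MvPolynomial (Fin n) K) • F q := by
    intro i
    let L1 : MvPolynomial (Fin n) K →ₗ[K] N :=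
      F.toLinearMap ∘ₗ (LinearMap.mulLeft K (X i))
    let L2 : MvPolynomial (Fin n) K →ₗ[K] N :=
      { toFun := fun q => (X i : MvPolynomial (Fin n) K) • F q
        map_add' := fun x y => by simp only [map_add, smul_add]
        map_smul' := fun k q => by
          simp only [map_smul, RingHom.id_apply]
          exact smul_comm _ _ _ }
    have hL : L1 = L2 := by
      apply (basisMonomials (Fin n) K).ext
      intro d
      have h1 : (basisMonomials (Fin n) K) d = monomial d 1 :=
        congrFun (coe_basisMonomials (Fin n) K) d
      rw [h1]
      simp only [L1, L2, LinearMap.comp_apply, LinearMap.mulLeft_apply, LinearMap.coe_mk, AddHom.coe_mk, LinearEquiv.coe_coe]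
      have h2 : (X i : MvPolynomial (Fin n) K) * monomial d 1
          = monomial (Finsupp.single i 1 + d) 1 := by
        rw [show (X i : MvPolynomial (Fin n) K) = monomial (Finsupp.single i 1) 1 from rfl,
          monomial_mul, one_mul]
      rw [h2, hF, hF, hstep (f d) i (hfle d)]
      show nb (f (Finsupp.single i 1 + d)) = nb (f d + Pi.single i 1)
      congr 1
      funext j
      simp only [hf, Pi.add_apply, Finsupp.equivFunOnFinite_apply, Finsupp.add_apply]
      rcases eq_or_ne i j with hij | hij
      · subst hij
        rw [Finsupp.single_eq_same, Pi.single_eq_same]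
        omega
      · rw [Finsupp.single_eq_of_ne' hij, Pi.single_eq_of_ne (Ne.symm hij)]
        omega
    intro q
    have hq := LinearMap.congr_fun hL q
    simp only [L1, L2, LinearMap.comp_apply, LinearMap.mulLeft_apply, LinearMap.coe_mk, AddHom.coe_mk, LinearEquiv.coe_coe] at hq
    exact hq
  have hmul : ∀ p q : MvPolynomial (Fin n) K, F (p * q) = p • F q := by
    intro p
    induction p using MvPolynomial.induction_on with
    | C k =>
      intro q
      rw [← smul_eq_C_mul, map_smul, ← algebraMap_eq, algebraMap_smul]
    | add p₁ p₂ h₁ h₂ =>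
      intro q
      rw [add_mul, map_add, h₁, h₂, add_smul]
    | mul_X p i hp =>
      intro q
      rw [mul_assoc, hp, hFX, ← mul_smul]
  let E : MvPolynomial (Fin n) K ≃ₗ[MvPolynomial (Fin n) K] N :=
    { toFun := F
      map_add' := fun x y => map_add F x y
      map_smul' := fun p q => by
        simp only [smul_eq_mul, RingHom.id_apply]
        exact hmul p q
      invFun := F.symm
      left_inv := F.left_inv
      right_inv := F.right_inv }
  refine ⟨E.symm, ?_⟩
  intro b
  by_cases hb : sqrtv a ≤ b
  · rw [if_pos hb, hspan b hb, Submodule.map_span, Set.image_singleton]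
    have key : nb b = E (mono K (b - sqrtv a)) := by
      show nb b = F (mono K (b - sqrtv a))
      have h1 : mono K (b - sqrtv a)
          = monomial (Finsupp.equivFunOnFinite.symm (b - sqrtv a)) 1 := rfl
      rw [h1, hF]
      show nb b = nb (f _)
      rw [hfsur b hb]
    have h2 : (E.symm.toLinearMap.restrictScalars K) (nb b) = mono K (b - sqrtv a) := by
      show E.symm (nb b) = mono K (b - sqrtv a)
      rw [key, LinearEquiv.symm_apply_apply]
    rw [h2]
  · rw [if_neg hb, hbot b hb, Submodule.map_bot]
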